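/- Let d be a distance on X. If X is Smyth complete with respect to d (every d-Cauchy net has a Smyth limit), then the formal ball space X₊ = X × [0,∞) with distance d₊((x,r),(y,s)) = (d(x,y) − r + s)₊ is Smyth complete with respect to d₊. -/

import Mathlib

open ENNReal NNReal Filter Set

/-- A net `z : ι → Y` is `e`-Cauchy. -/
def CauchyNet {Y : Type} (ι : Type) (instι : Preorder ι) (e : Y → Y → ℝ≥0∞)
    (z : ι → Y) : Prop :=
  letI := instι
  ∀ ε : ℝ≥0∞, 0 < ε → ∃ γ₀, ∀ γ, γ₀ ≤ γ → ∀ δ, γ ≤ δ → e (z γ) (z δ) ≤ ε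

/-- `l` is a Smyth limit of the net `z`: `e w (z γ) → e w l` for all `w`. -/
def SmythLim {Y : Type} (ι : Type) (instι : Preorder ι) (e : Y → Y → ℝ≥0∞)
    (z : ι → Y) (l : Y) : Prop :=
  letI := instι
  ∀ w : Y, Filter.Tendsto (fun γ => e w (z γ)) Filter.atTop (nhds (e w l))

/-- `(Y, e)` is Smyth complete: every `e`-Cauchy net over a nonempty directed index
preorder has a Smyth limit. -/
def SmythComplete {Y : Type} (e : Y → Y → ℝ≥0∞) : Prop :=
  ∀ (ι : Type) (instι : Preorder ι), Nonempty ι →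
    (letI := instι; Directed (· ≤ ·) (id : ι → ι)) →
    ∀ z : ι → Y, CauchyNet ι instι e z → ∃ l, SmythLim ι instι e z l

/-- If `(X, d)` is Smyth complete, so is the formal ball space
`X₊ = X × [0,∞)` with `d₊((x,r),(y,s)) = (d x y − r + s)₊`. -/
theorem formalBall_smythComplete {X : Type} (d : X → X → ℝ≥0∞)
    (htri : ∀ x y z, d x z ≤ d x y + d y z)
    (hcomp : SmythComplete d) :
    SmythComplete (fun p q : X × ℝ≥0 => (d p.1 q.1 + (q.2 : ℝ≥0∞)) - (p.2 : ℝ≥0∞)) := by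
  intro ι instι hne hdir z hz
  letI := instι
  haveI : Nonempty ι := hne
  haveI hdir' : IsDirected ι (· ≤ ·) := ⟨fun a b => by simpa using hdir a b⟩
  set x : ι → X := fun γ => (z γ).1 with hx_def
  set R : ι → ℝ≥0∞ := fun γ => ((z γ).2 : ℝ≥0∞) with hR_def
  have hRtop : ∀ γ, R γ ≠ ⊤ := fun γ => ENNReal.coe_ne_top
  -- basic consequence of Cauchyness
  have key : ∀ ε : ℝ≥0∞, 0 < ε → ∃ γ₀, ∀ γ, γ₀ ≤ γ → ∀ δ, γ ≤ δ →
      d (x γ) (x δ) + R δ ≤ ε + R γ := by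
    intro ε hε
    obtain ⟨γ₀, h⟩ := hz ε hε
    exact ⟨γ₀, fun γ hγ δ hδ => tsub_le_iff_right.mp (h γ hγ δ hδ)⟩
  have keyR : ∀ ε : ℝ≥0∞, 0 < ε → ∃ γ₀, ∀ γ, γ₀ ≤ γ → ∀ δ, γ ≤ δ →
      R δ ≤ ε + R γ := by
    intro ε hε
    obtain ⟨γ₀, h⟩ := key ε hε
    exact ⟨γ₀, fun γ hγ δ hδ => le_trans (le_add_self) (h γ hγ δ hδ)⟩
  set ρ : ℝ≥0∞ := Filter.liminf R Filter.atTop with hρ_def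
  have hρtop : ρ ≠ ⊤ := by
    obtain ⟨γ₀, h⟩ := keyR 1 one_pos
    have hfreq : ∃ᶠ δ in atTop, R δ ≤ 1 + R γ₀ := by
      apply Filter.Eventually.frequently
      rw [eventually_atTop]
      exact ⟨γ₀, fun δ hδ => h γ₀ le_rfl δ hδ⟩
    have := Filter.liminf_le_of_frequently_le' hfreq
    exact ne_top_of_le_ne_top (by simp [hRtop γ₀, ENNReal.add_ne_top]) this
  have hlow : ∀ ε : ℝ≥0∞, 0 < ε → ∀ᶠ γ in atTop, ρ ≤ R γ + ε := by
    intro ε hε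
    rcases eq_or_ne ρ 0 with h0 | h0
    · exact Filter.Eventually.of_forall fun γ => by simp [h0]
    · have hlt : ρ - ε < ρ := ENNReal.sub_lt_self hρtop h0 hε.ne'
      have := Filter.eventually_lt_of_lt_liminf (hρ_def ▸ hlt)
      filter_upwards [this] with γ hγ
      exact tsub_le_iff_right.mp hγ.le
  have main : ∀ ε : ℝ≥0∞, 0 < ε → ε ≠ ⊤ → ∃ γ₁, ∀ γ, γ₁ ≤ γ →
      (R γ ≤ ρ + 2 * ε ∧ ∀ δ, γ ≤ δ → d (x γ) (x δ) ≤ 4 * ε) := by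
    intro ε hε hεtop
    obtain ⟨γ₀, hkey⟩ := key ε hε
    -- frequently R γ ≤ ρ + ε
    have hfreq : ∃ᶠ γ in atTop, R γ < ρ + ε := by
      apply Filter.frequently_lt_of_liminf_lt
      · exact Filter.IsBounded.isCobounded_ge (Filter.isBounded_le_of_top)
          |>.mono le_rfl |>.mono le_rfl
      · exact hρ_def ▸ ENNReal.lt_add_right hρtop hε.ne'
    obtain ⟨γ₂, hγ₂⟩ := eventually_atTop.mp (hlow ε hε)
    obtain ⟨γ₁, hγ₁ρ, hγ₁γ₀, hγ₁γ₂⟩ :=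
      (hfreq.and_eventually ((eventually_ge_atTop γ₀).and (eventually_ge_atTop γ₂))).exists
    refine ⟨γ₁, fun γ hγ => ?_⟩
    have hRγ : R γ ≤ ρ + 2 * ε := by
      have h1 : R γ ≤ ε + R γ₁ :=
        le_trans le_add_self (hkey γ₁ hγ₁γ₀ γ hγ)
      calc R γ ≤ ε + R γ₁ := h1
        _ ≤ ε + (ρ + ε) := add_le_add le_rfl hγ₁ρ.le
        _ = ρ + 2 * ε := by ring
    refine ⟨hRγ, fun δ hδ => ?_⟩
    have hd : d (x γ) (x δ) + R δ ≤ ε + R γ := hkey γ (le_trans hγ₁γ₀ hγ) δ hδ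
    have hρδ : ρ ≤ R δ + ε := hγ₂ δ (le_trans (le_trans hγ₁γ₂ hγ) hδ)
    have h4 : d (x γ) (x δ) + R δ ≤ 4 * ε + R δ := by
      calc d (x γ) (x δ) + R δ ≤ ε + R γ := hd
        _ ≤ ε + (ρ + 2 * ε) := by gcongr
        _ ≤ ε + ((R δ + ε) + 2 * ε) := by gcongr
        _ = 4 * ε + R δ := by ring
    exact (ENNReal.add_le_add_iff_right (hRtop δ)).mp h4
  -- R tends to ρ
  have hRlim : Filter.Tendsto R Filter.atTop (nhds ρ) := by
    apply tendsto_of_liminf_eq_limsup hρ_def.symm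
    refine le_antisymm ?_ (hρ_def ▸ Filter.liminf_le_limsup)
    apply ENNReal.le_of_forall_pos_le_add
    intro ε hε _
    have hε2 : (0 : ℝ≥0∞) < (ε : ℝ≥0∞) / 2 :=
      ENNReal.div_pos (by exact_mod_cast hε.ne') (by norm_num)
    obtain ⟨γ₁, h⟩ := main ((ε : ℝ≥0∞) / 2) hε2
      (by simp [ENNReal.div_eq_top])
    have hev : ∀ᶠ γ in atTop, R γ ≤ ρ + (ε : ℝ≥0∞) := by
      rw [eventually_atTop]
      refine ⟨γ₁, fun γ hγ => le_trans (h γ hγ).1 ?_⟩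
      gcongr
      rw [ENNReal.mul_div_cancel' (by norm_num) (by norm_num)]
    exact Filter.limsup_le_of_le (by isBoundedDefault) hev
  -- x is d-Cauchy
  have hxC : CauchyNet ι instι d x := by
    intro ε hε
    rcases eq_or_ne ε ⊤ with rfl | hεtop
    · exact ⟨Classical.arbitrary ι, fun _ _ _ _ => le_top⟩
    · have hε4 : (0 : ℝ≥0∞) < ε / 4 := ENNReal.div_pos hε.ne' (by norm_num)
      obtain ⟨γ₁, h⟩ := main (ε / 4) hε4 (by simp [ENNReal.div_eq_top, hεtop])
      refine ⟨γ₁, fun γ hγ δ hδ => ?_⟩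
      have := (h γ hγ).2 δ hδ
      rwa [ENNReal.mul_div_cancel' (by norm_num) (by norm_num)] at this
  obtain ⟨l, hl⟩ := hcomp ι instι hne hdir x hxC
  refine ⟨(l, ρ.toNNReal), fun w => ?_⟩
  have hcoe : ((ρ.toNNReal : ℝ≥0∞)) = ρ := ENNReal.coe_toNNReal hρtop
  simp only [hcoe]
  exact ENNReal.Tendsto.sub ((hl w.1).add hRlim) tendsto_const_nhds
    (Or.inr ENNReal.coe_ne_top)
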